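/- Theorem 1 (descent property of the IRLS step of RODESSA, Tukey version): Let c1, c2 > 0 and set rho1(t) = rho_{c1}(sqrt(t)) and rho2(t) = rho_{c2}(sqrt(t)) for t >= 0, where rho_c is Tukey's biweight. Let x = (x_{ia}^{(j)}), theta and theta' be real arrays indexed by (i, j, a) with 1 <= i <= N, 1 <= j <= p, 1 <= a <= n_i, and put f(theta)_{ia}^{(j)} = (x_{ia}^{(j)} - theta_{ia}^{(j)})^2. If the weighted least squares objective with the weights computed at theta does not increase, i.e. sum over (i,j,a) of w_{ia}^{(j)}(f(theta)) * (x_{ia}^{(j)} - theta'_{ia}^{(j)})^2 <= sum over (i,j,a) of w_{ia}^{(j)}(f(theta)) * (x_{ia}^{(j)} - theta_{ia}^{(j)})^2, then L(f(theta')) <= L(f(theta)). In particular, each iteration of the IRLS algorithm decreases the objective function. -/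

import Mathlib

open scoped BigOperators

/-- Tukey's biweight function `ρ_c`. -/
noncomputable def tukeyBiweight (c t : ℝ) : ℝ :=
  if |t| ≤ c then 1 - (1 - t ^ 2 / c ^ 2) ^ 3 else 1

/-- The function `t ↦ ρ_c(√t)`; for `t ≥ 0` this equals
`tukeyBiweight c (Real.sqrt t)`, i.e. `1 - (1 - t/c²)³` on `[0, c²]` and `1` beyond. -/
noncomputable def tukeySq (c t : ℝ) : ℝ :=
  if t ≤ c ^ 2 then 1 - (1 - t / c ^ 2) ^ 3 else 1

/-- The diagonal mean of squared residuals `r_i^{(j)}(f)`. -/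
noncomputable def rIJ {N p : ℕ} (n : Fin N → ℕ)
    (f : (i : Fin N) → Fin p → Fin (n i) → ℝ) (i : Fin N) (j : Fin p) : ℝ :=
  (∑ a : Fin (n i), f i j a) / (n i : ℝ)

/-- The casewise quantity `r_i(f)`. -/
noncomputable def rI {N p : ℕ} (n : Fin N → ℕ) (σ1 : Fin p → ℝ) (ρ1 : ℝ → ℝ)
    (f : (i : Fin N) → Fin p → Fin (n i) → ℝ) (i : Fin N) : ℝ :=
  (∑ j : Fin p, σ1 j ^ 2 * ρ1 (rIJ n f i j / σ1 j ^ 2)) / (p : ℝ)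

/-- The RODESSA weights `w_{ia}^{(j)}(f) = ρ₂'(r_i(f)/σ₂²) * ρ₁'(r_i^{(j)}(f)/σ_{1,j}²)`. -/
noncomputable def rodessaWeight {N p : ℕ} (n : Fin N → ℕ) (σ1 : Fin p → ℝ) (σ2 : ℝ)
    (ρ1 ρ1' ρ2' : ℝ → ℝ)
    (f : (i : Fin N) → Fin p → Fin (n i) → ℝ) (i : Fin N) (j : Fin p) : ℝ :=
  ρ2' (rI n σ1 ρ1 f i / σ2 ^ 2) * ρ1' (rIJ n f i j / σ1 j ^ 2)

/-- The composite RODESSA objective `L(f)`. -/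
noncomputable def Lobj {N p : ℕ} (n : Fin N → ℕ) (σ1 : Fin p → ℝ) (σ2 : ℝ)
    (ρ1 ρ2 : ℝ → ℝ) (f : (i : Fin N) → Fin p → Fin (n i) → ℝ) : ℝ :=
  ∑ i : Fin N, (p : ℝ) * (n i : ℝ) * σ2 ^ 2 *
    ρ2 ((∑ j : Fin p, (n i : ℝ) * σ1 j ^ 2 *
          ρ1 ((∑ a : Fin (n i), f i j a) / ((n i : ℝ) * σ1 j ^ 2))) /
        ((p : ℝ) * (n i : ℝ) * σ2 ^ 2))

/-- The derivative of `tukeySq c`. -/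
noncomputable def tukeyD (c t : ℝ) : ℝ :=
  if t ≤ c ^ 2 then 3 * (1 - t / c ^ 2) ^ 2 / c ^ 2 else 0

lemma tukeyD_nonneg (c t : ℝ) : 0 ≤ tukeyD c t := by
  unfold tukeyD; split
  · exact div_nonneg (by positivity) (sq_nonneg c)
  · exact le_rfl

lemma tukeySq_hasDerivAt {c : ℝ} (hc : 0 < c) (t : ℝ) :
    HasDerivAt (tukeySq c) (tukeyD c t) t := by
  have hc2 : (0:ℝ) < c ^ 2 := by positivity
  have hpoly : ∀ s : ℝ, HasDerivAt (fun u : ℝ => 1 - (1 - u / c ^ 2) ^ 3)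
      (3 * (1 - s / c ^ 2) ^ 2 / c ^ 2) s := by
    intro s
    have h1 : HasDerivAt (fun u : ℝ => 1 - u / c ^ 2) (-(c ^ 2)⁻¹) s := by
      simpa [div_eq_mul_inv] using ((hasDerivAt_id s).div_const (c ^ 2)).const_sub 1
    have h2 := (h1.pow 3).const_sub 1
    refine h2.congr_deriv ?_
    rw [show (3:ℕ) - 1 = 2 from rfl, Nat.cast_ofNat]
    ring
  rcases lt_trichotomy t (c ^ 2) with h | h | h
  · have heq : tukeySq c =ᶠ[nhds t] fun u => 1 - (1 - u / c ^ 2) ^ 3 := by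
      filter_upwards [eventually_lt_nhds h] with u hu
      simp [tukeySq, hu.le]
    have := (hpoly t).congr_of_eventuallyEq heq
    simpa [tukeyD, h.le] using this
  · subst h
    have hval : tukeySq c (c ^ 2) = 1 := by simp [tukeySq, div_self hc2.ne']
    have hD : tukeyD c (c ^ 2) = 0 := by simp [tukeyD, div_self hc2.ne']
    rw [hD, hasDerivAt_iff_tendsto_slope]
    have hcts : Continuous (fun s : ℝ => (max (c ^ 2 - s) 0) ^ 2 / c ^ 6) := by
      fun_prop
    have hcont : Filter.Tendsto (fun s : ℝ => (max (c ^ 2 - s) 0) ^ 2 / c ^ 6)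
        (nhds (c ^ 2)) (nhds 0) := by
      have := hcts.tendsto (c ^ 2)
      simpa using this
    refine Filter.Tendsto.congr' ?_ (hcont.mono_left nhdsWithin_le_nhds)
    filter_upwards [self_mem_nhdsWithin] with s hs
    have hs' : s ≠ c ^ 2 := hs
    have hne : s - c ^ 2 ≠ 0 := sub_ne_zero.mpr hs'
    rw [slope_def_field, hval]
    rcases le_or_gt s (c ^ 2) with hsle | hslt
    · rw [max_eq_left (by linarith)]
      simp only [tukeySq, if_pos hsle]
      rw [eq_div_iff hne]
      field_simp
      ring
    · rw [max_eq_right (by linarith)]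
      simp only [tukeySq, if_neg (not_le.mpr hslt)]
      simp
  · have heq : tukeySq c =ᶠ[nhds t] fun _ => (1:ℝ) := by
      filter_upwards [eventually_gt_nhds h] with u hu
      simp [tukeySq, not_le.mpr hu]
    have := (hasDerivAt_const t (1:ℝ)).congr_of_eventuallyEq heq
    simpa [tukeyD, not_le.mpr h] using this

/-- Concavity tangent-line inequality for `tukeySq`. -/
lemma tukeySq_tangent {c : ℝ} (hc : 0 < c) (s t : ℝ) :
    tukeySq c s ≤ tukeySq c t + tukeyD c t * (s - t) := by
  have hc2 : (0:ℝ) < c ^ 2 := by positivity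
  set a := t / c ^ 2 with ha
  set b := s / c ^ 2 with hb
  have hst : s - t = c ^ 2 * (b - a) := by
    rw [ha, hb]; field_simp
  unfold tukeySq tukeyD
  rcases le_or_gt t (c ^ 2) with ht | ht
  · have hA : a ≤ 1 := (div_le_one hc2).mpr ht
    rw [if_pos ht, if_pos ht, hst]
    have hsimp : 3 * (1 - a) ^ 2 / c ^ 2 * (c ^ 2 * (b - a)) = 3 * (1 - a) ^ 2 * (b - a) := by
      field_simp
    rw [hsimp]
    rcases le_or_gt s (c ^ 2) with hs | hs
    · have hB : b ≤ 1 := (div_le_one hc2).mpr hs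
      rw [if_pos hs]
      nlinarith [mul_nonneg (sq_nonneg (b - a)) (show (0:ℝ) ≤ 3 - 2 * a - b by linarith)]
    · have hB : 1 < b := (one_lt_div hc2).mpr hs
      rw [if_neg (not_le.mpr hs)]
      nlinarith [mul_nonneg (sq_nonneg (1 - a)) (show (0:ℝ) ≤ 3 * b - 2 * a - 1 by linarith)]
  · rw [if_neg (not_le.mpr ht), if_neg (not_le.mpr ht), zero_mul, add_zero]
    rcases le_or_gt s (c ^ 2) with hs | hs
    · have hB : b ≤ 1 := (div_le_one hc2).mpr hs
      rw [if_pos hs]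
      nlinarith [pow_nonneg (show (0:ℝ) ≤ 1 - b by linarith) 3]
    · rw [if_neg (not_le.mpr hs)]

/-- Core descent lemma, with the weights written via `tukeyD`. -/
lemma rodessa_descent_aux {N p : ℕ} (hp : 1 ≤ p) {n : Fin N → ℕ} (hn : ∀ i, 1 ≤ n i)
    {σ1 : Fin p → ℝ} (hσ1 : ∀ j, 0 < σ1 j) {σ2 : ℝ} (hσ2 : 0 < σ2)
    {c1 c2 : ℝ} (hc1 : 0 < c1) (hc2 : 0 < c2)
    (f g : (i : Fin N) → Fin p → Fin (n i) → ℝ)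
    (hW : ∑ i : Fin N, ∑ j : Fin p, ∑ a : Fin (n i),
        (tukeyD c2 (rI n σ1 (tukeySq c1) f i / σ2 ^ 2) *
          tukeyD c1 (rIJ n f i j / σ1 j ^ 2)) * g i j a
      ≤ ∑ i : Fin N, ∑ j : Fin p, ∑ a : Fin (n i),
        (tukeyD c2 (rI n σ1 (tukeySq c1) f i / σ2 ^ 2) *
          tukeyD c1 (rIJ n f i j / σ1 j ^ 2)) * f i j a) :
    Lobj n σ1 σ2 (tukeySq c1) (tukeySq c2) g ≤ Lobj n σ1 σ2 (tukeySq c1) (tukeySq c2) f := by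
  classical
  have hm : ∀ i : Fin N, (0:ℝ) < (n i : ℝ) := fun i => by exact_mod_cast hn i
  have hPp : (0:ℝ) < (p : ℝ) := by exact_mod_cast hp
  have hσ2sq : (0:ℝ) < σ2 ^ 2 := pow_pos hσ2 2
  have hArg : ∀ (h : (i : Fin N) → Fin p → Fin (n i) → ℝ) (i : Fin N),
      (∑ j : Fin p, (n i : ℝ) * σ1 j ^ 2 *
          tukeySq c1 ((∑ a : Fin (n i), h i j a) / ((n i : ℝ) * σ1 j ^ 2))) /
        ((p : ℝ) * (n i : ℝ) * σ2 ^ 2)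
      = rI n σ1 (tukeySq c1) h i / σ2 ^ 2 := by
    intro h i
    unfold rI rIJ
    have e1 : ∀ j : Fin p, (n i : ℝ) * σ1 j ^ 2 *
        tukeySq c1 ((∑ a : Fin (n i), h i j a) / ((n i : ℝ) * σ1 j ^ 2))
        = (n i : ℝ) * (σ1 j ^ 2 *
            tukeySq c1 ((∑ a : Fin (n i), h i j a) / (n i : ℝ) / σ1 j ^ 2)) := by
      intro j; rw [div_div, mul_assoc]
    rw [Finset.sum_congr rfl fun j _ => e1 j, ← Finset.mul_sum,
      show (p : ℝ) * (n i : ℝ) * σ2 ^ 2 = (n i : ℝ) * ((p : ℝ) * σ2 ^ 2) by ring,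
      mul_div_mul_left _ _ (hm i).ne', div_div]
  have key : ∀ i : Fin N,
      (p : ℝ) * (n i : ℝ) * σ2 ^ 2 *
        tukeySq c2 ((∑ j : Fin p, (n i : ℝ) * σ1 j ^ 2 *
            tukeySq c1 ((∑ a : Fin (n i), g i j a) / ((n i : ℝ) * σ1 j ^ 2))) /
          ((p : ℝ) * (n i : ℝ) * σ2 ^ 2))
      ≤ (p : ℝ) * (n i : ℝ) * σ2 ^ 2 *
        tukeySq c2 ((∑ j : Fin p, (n i : ℝ) * σ1 j ^ 2 *
            tukeySq c1 ((∑ a : Fin (n i), f i j a) / ((n i : ℝ) * σ1 j ^ 2))) /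
          ((p : ℝ) * (n i : ℝ) * σ2 ^ 2))
        + ∑ j : Fin p, ∑ a : Fin (n i),
            (tukeyD c2 (rI n σ1 (tukeySq c1) f i / σ2 ^ 2) *
              tukeyD c1 (rIJ n f i j / σ1 j ^ 2)) * (g i j a - f i j a) := by
    intro i
    have hC : (0:ℝ) < (p : ℝ) * (n i : ℝ) * σ2 ^ 2 :=
      mul_pos (mul_pos hPp (hm i)) hσ2sq
    have hAf := hArg f i
    set C := (p : ℝ) * (n i : ℝ) * σ2 ^ 2 with hCdef
    set Tf : Fin p → ℝ := fun j => (n i : ℝ) * σ1 j ^ 2 *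
      tukeySq c1 ((∑ a : Fin (n i), f i j a) / ((n i : ℝ) * σ1 j ^ 2)) with hTf
    set Tg : Fin p → ℝ := fun j => (n i : ℝ) * σ1 j ^ 2 *
      tukeySq c1 ((∑ a : Fin (n i), g i j a) / ((n i : ℝ) * σ1 j ^ 2)) with hTg
    have tan2 := tukeySq_tangent hc2 ((∑ j : Fin p, Tg j) / C) ((∑ j : Fin p, Tf j) / C)
    have hdiff : C * ((∑ j : Fin p, Tg j) / C - (∑ j : Fin p, Tf j) / C)
        = ∑ j : Fin p, (Tg j - Tf j) := by
      rw [Finset.sum_sub_distrib]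
      field_simp
    have hterm : ∀ j ∈ (Finset.univ : Finset (Fin p)),
        tukeyD c2 ((∑ j : Fin p, Tf j) / C) * (Tg j - Tf j)
        ≤ ∑ a : Fin (n i),
            (tukeyD c2 (rI n σ1 (tukeySq c1) f i / σ2 ^ 2) *
              tukeyD c1 (rIJ n f i j / σ1 j ^ 2)) * (g i j a - f i j a) := by
      intro j _
      have hms : (0:ℝ) < (n i : ℝ) * σ1 j ^ 2 := mul_pos (hm i) (pow_pos (hσ1 j) 2)
      have tan1 := tukeySq_tangent hc1
        ((∑ a : Fin (n i), g i j a) / ((n i : ℝ) * σ1 j ^ 2))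
        ((∑ a : Fin (n i), f i j a) / ((n i : ℝ) * σ1 j ^ 2))
      have hsub : ((n i : ℝ) * σ1 j ^ 2) *
          ((∑ a : Fin (n i), g i j a) / ((n i : ℝ) * σ1 j ^ 2)
            - (∑ a : Fin (n i), f i j a) / ((n i : ℝ) * σ1 j ^ 2))
          = ∑ a : Fin (n i), (g i j a - f i j a) := by
        rw [Finset.sum_sub_distrib]
        field_simp
        exact mul_div_cancel_left₀ _ (mul_pos (hm i) (hσ1 j)).ne'
      have hrIJ : rIJ n f i j / σ1 j ^ 2
          = (∑ a : Fin (n i), f i j a) / ((n i : ℝ) * σ1 j ^ 2) := by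
        unfold rIJ; rw [div_div]
      have step1 : Tg j - Tf j ≤ ((n i : ℝ) * σ1 j ^ 2) *
          (tukeyD c1 ((∑ a : Fin (n i), f i j a) / ((n i : ℝ) * σ1 j ^ 2)) *
            ((∑ a : Fin (n i), g i j a) / ((n i : ℝ) * σ1 j ^ 2)
              - (∑ a : Fin (n i), f i j a) / ((n i : ℝ) * σ1 j ^ 2))) := by
        have h1 : Tg j - Tf j = ((n i : ℝ) * σ1 j ^ 2) *
            (tukeySq c1 ((∑ a : Fin (n i), g i j a) / ((n i : ℝ) * σ1 j ^ 2))
              - tukeySq c1 ((∑ a : Fin (n i), f i j a) / ((n i : ℝ) * σ1 j ^ 2))) := by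
          rw [hTg, hTf]; ring
        rw [h1]
        exact mul_le_mul_of_nonneg_left (by linarith) hms.le
      calc tukeyD c2 ((∑ j : Fin p, Tf j) / C) * (Tg j - Tf j)
          ≤ tukeyD c2 ((∑ j : Fin p, Tf j) / C) * (((n i : ℝ) * σ1 j ^ 2) *
              (tukeyD c1 ((∑ a : Fin (n i), f i j a) / ((n i : ℝ) * σ1 j ^ 2)) *
                ((∑ a : Fin (n i), g i j a) / ((n i : ℝ) * σ1 j ^ 2)
                  - (∑ a : Fin (n i), f i j a) / ((n i : ℝ) * σ1 j ^ 2)))) :=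
            mul_le_mul_of_nonneg_left step1 (tukeyD_nonneg _ _)
        _ = (tukeyD c2 ((∑ j : Fin p, Tf j) / C) *
              tukeyD c1 ((∑ a : Fin (n i), f i j a) / ((n i : ℝ) * σ1 j ^ 2))) *
              (((n i : ℝ) * σ1 j ^ 2) *
                ((∑ a : Fin (n i), g i j a) / ((n i : ℝ) * σ1 j ^ 2)
                  - (∑ a : Fin (n i), f i j a) / ((n i : ℝ) * σ1 j ^ 2))) := by ring
        _ = (tukeyD c2 ((∑ j : Fin p, Tf j) / C) *
              tukeyD c1 ((∑ a : Fin (n i), f i j a) / ((n i : ℝ) * σ1 j ^ 2))) *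
              (∑ a : Fin (n i), (g i j a - f i j a)) := by rw [hsub]
        _ = ∑ a : Fin (n i),
              (tukeyD c2 ((∑ j : Fin p, Tf j) / C) *
                tukeyD c1 ((∑ a : Fin (n i), f i j a) / ((n i : ℝ) * σ1 j ^ 2))) *
                (g i j a - f i j a) := Finset.mul_sum _ _ _
        _ = ∑ a : Fin (n i),
              (tukeyD c2 (rI n σ1 (tukeySq c1) f i / σ2 ^ 2) *
                tukeyD c1 (rIJ n f i j / σ1 j ^ 2)) * (g i j a - f i j a) := by
            rw [hAf, hrIJ]
    calc C * tukeySq c2 ((∑ j : Fin p, Tg j) / C)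
        ≤ C * (tukeySq c2 ((∑ j : Fin p, Tf j) / C)
            + tukeyD c2 ((∑ j : Fin p, Tf j) / C) *
              ((∑ j : Fin p, Tg j) / C - (∑ j : Fin p, Tf j) / C)) :=
          mul_le_mul_of_nonneg_left tan2 hC.le
      _ = C * tukeySq c2 ((∑ j : Fin p, Tf j) / C)
            + tukeyD c2 ((∑ j : Fin p, Tf j) / C) *
              (C * ((∑ j : Fin p, Tg j) / C - (∑ j : Fin p, Tf j) / C)) := by ring
      _ = C * tukeySq c2 ((∑ j : Fin p, Tf j) / C)
            + tukeyD c2 ((∑ j : Fin p, Tf j) / C) * (∑ j : Fin p, (Tg j - Tf j)) := by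
          rw [hdiff]
      _ = C * tukeySq c2 ((∑ j : Fin p, Tf j) / C)
            + ∑ j : Fin p, tukeyD c2 ((∑ j : Fin p, Tf j) / C) * (Tg j - Tf j) := by
          rw [Finset.mul_sum]
      _ ≤ C * tukeySq c2 ((∑ j : Fin p, Tf j) / C)
            + ∑ j : Fin p, ∑ a : Fin (n i),
                (tukeyD c2 (rI n σ1 (tukeySq c1) f i / σ2 ^ 2) *
                  tukeyD c1 (rIJ n f i j / σ1 j ^ 2)) * (g i j a - f i j a) :=
          add_le_add_right (Finset.sum_le_sum hterm) _
  unfold Lobj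
  refine (Finset.sum_le_sum fun i _ => key i).trans ?_
  rw [Finset.sum_add_distrib]
  have hzero : (∑ i : Fin N, ∑ j : Fin p, ∑ a : Fin (n i),
      (tukeyD c2 (rI n σ1 (tukeySq c1) f i / σ2 ^ 2) *
        tukeyD c1 (rIJ n f i j / σ1 j ^ 2)) * (g i j a - f i j a)) ≤ 0 := by
    have hsplit : (∑ i : Fin N, ∑ j : Fin p, ∑ a : Fin (n i),
        (tukeyD c2 (rI n σ1 (tukeySq c1) f i / σ2 ^ 2) *
          tukeyD c1 (rIJ n f i j / σ1 j ^ 2)) * (g i j a - f i j a))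
        = (∑ i : Fin N, ∑ j : Fin p, ∑ a : Fin (n i),
            (tukeyD c2 (rI n σ1 (tukeySq c1) f i / σ2 ^ 2) *
              tukeyD c1 (rIJ n f i j / σ1 j ^ 2)) * g i j a)
          - ∑ i : Fin N, ∑ j : Fin p, ∑ a : Fin (n i),
              (tukeyD c2 (rI n σ1 (tukeySq c1) f i / σ2 ^ 2) *
                tukeyD c1 (rIJ n f i j / σ1 j ^ 2)) * f i j a := by
      simp only [mul_sub, Finset.sum_sub_distrib]
    rw [hsplit]
    linarith
  linarith

theorem rodessa_irls_descent_tukey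
    {N p : ℕ} (hN : 1 ≤ N) (hp : 1 ≤ p)
    {n : Fin N → ℕ} (hn : ∀ i, 1 ≤ n i)
    {σ1 : Fin p → ℝ} (hσ1 : ∀ j, 0 < σ1 j) {σ2 : ℝ} (hσ2 : 0 < σ2)
    {c1 c2 : ℝ} (hc1 : 0 < c1) (hc2 : 0 < c2)
    (x θ θ' : (i : Fin N) → Fin p → Fin (n i) → ℝ)
    (hWLS : ∑ i : Fin N, ∑ j : Fin p, ∑ a : Fin (n i),
        rodessaWeight n σ1 σ2 (tukeySq c1) (deriv (tukeySq c1)) (deriv (tukeySq c2))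
          (fun i j a => (x i j a - θ i j a) ^ 2) i j * (x i j a - θ' i j a) ^ 2
      ≤ ∑ i : Fin N, ∑ j : Fin p, ∑ a : Fin (n i),
        rodessaWeight n σ1 σ2 (tukeySq c1) (deriv (tukeySq c1)) (deriv (tukeySq c2))
          (fun i j a => (x i j a - θ i j a) ^ 2) i j * (x i j a - θ i j a) ^ 2) :
    Lobj n σ1 σ2 (tukeySq c1) (tukeySq c2) (fun i j a => (x i j a - θ' i j a) ^ 2)
      ≤ Lobj n σ1 σ2 (tukeySq c1) (tukeySq c2) (fun i j a => (x i j a - θ i j a) ^ 2) := by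
  have hd1 : deriv (tukeySq c1) = tukeyD c1 :=
    funext fun t => (tukeySq_hasDerivAt hc1 t).deriv
  have hd2 : deriv (tukeySq c2) = tukeyD c2 :=
    funext fun t => (tukeySq_hasDerivAt hc2 t).deriv
  exact rodessa_descent_aux hp hn hσ1 hσ2 hc1 hc2 _ _
    (by simpa only [rodessaWeight, hd1, hd2] using hWLS)
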